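/- In a frame L, a completely prime filter L \ ↓p (for p a prime element) is an exact filter if and only if p is a covered prime, i.e., whenever ⋀ᵢ xᵢ = p for a family xᵢ, then xᵢ = p for some i. -/
import Mathlib


/-- A meet (of the set `S`) is exact if it distributes over all joins. -/
def IsExactMeet {L : Type*} [Order.Frame L] (S : Set L) : Prop :=
  ∀ b : L, sInf ((· ⊔ b) '' S) = sInf S ⊔ b

/-- A filter of a frame: contains ⊤, upward closed, closed under binary meets. -/
def IsFrameFilter {L : Type*} [Order.Frame L] (F : Set L) : Prop :=
  ⊤ ∈ F ∧ (∀ x ∈ F, ∀ y : L, x ≤ y → y ∈ F) ∧ ∀ x ∈ F, ∀ y ∈ F, x ⊓ y ∈ F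

/-- An exact filter: a filter closed under exact meets. -/
def IsExactFilter {L : Type*} [Order.Frame L] (F : Set L) : Prop :=
  IsFrameFilter F ∧ ∀ S : Set L, S ⊆ F → IsExactMeet S → sInf S ∈ F

/-- For a prime `p` of a frame `L`, the completely prime filter `L ∖ ↓p` is exact
iff `p` is covered: whenever `⋀ S = p`, some element of `S` equals `p`. -/
theorem stmt3 {L : Type*} [Order.Frame L] (p : L)
    (hp : ∀ x y : L, x ⊓ y ≤ p → x ≤ p ∨ y ≤ p) :
    IsExactFilter {x : L | ¬ x ≤ p} ↔ ∀ S : Set L, sInf S = p → p ∈ S := by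
  constructor
  · rintro ⟨hF, hE⟩ S hS
    by_contra hpS
    set S' : Set L := {y | p < y} with hS'def
    have hsub : S' ⊆ {x : L | ¬ x ≤ p} := by
      intro y hy hle
      exact (ne_of_gt hy) (le_antisymm hle hy.le)
    have hinf : sInf S' = p := by
      apply le_antisymm
      · refine le_trans (sInf_le_sInf ?_) (le_of_eq hS)
        intro x hx
        have hpx : p ≤ x := hS ▸ sInf_le hx
        exact lt_of_le_of_ne hpx (fun e => hpS (e ▸ hx))
      · exact le_sInf fun y hy => hy.le
    have hexact : IsExactMeet S' := by
      intro b
      rw [hinf]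
      apply le_antisymm
      · by_cases hb : b ≤ p
        · have : sInf ((· ⊔ b) '' S') ≤ sInf S' := by
            refine sInf_le_sInf ?_
            intro y hy
            exact ⟨y, hy, sup_eq_left.2 (hb.trans hy.le)⟩
          calc sInf ((· ⊔ b) '' S') ≤ sInf S' := this
            _ = p := hinf
            _ ≤ p ⊔ b := le_sup_left
        · have hmem : p ⊔ b ∈ S' := by
            refine lt_of_le_of_ne le_sup_left ?_
            intro e
            exact hb (le_sup_right.trans e.symm.le)
          have : sInf ((· ⊔ b) '' S') ≤ (p ⊔ b) ⊔ b := sInf_le ⟨p ⊔ b, hmem, rfl⟩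
          simpa [sup_assoc] using this
      · refine le_sInf ?_
        rintro _ ⟨y, hy, rfl⟩
        exact sup_le_sup_right hy.le b
    exact (hE S' hsub hexact) (hinf ▸ le_refl p)
  · intro h
    refine ⟨⟨?_, ?_, ?_⟩, ?_⟩
    · intro ht
      have hne : sInf (∅ : Set L) = p := by
        rw [sInf_empty]; exact le_antisymm ht le_top
      exact (h ∅ hne).elim
    · intro x hx y hxy hyp
      exact hx (hxy.trans hyp)
    · intro x hx y hy hmem
      rcases hp x y hmem with h' | h'
      · exact hx h'
      · exact hy h'
    · intro S hS hEx hle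
      have key : sInf ((· ⊔ p) '' S) = p := by
        rw [hEx p, sup_eq_right.2 hle]
      rcases h _ key with ⟨x, hx, hxp⟩
      exact hS hx (sup_eq_right.1 hxp)
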